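/- arXiv:2012.14376 — 2 statements merged into one kernel-verified Lean document; each statement's English description precedes it below -/
import Mathlib

section
/- Let $G$ be a finite group acting faithfully on a field $K$ by automorphisms, with fixed field $K^G$, and let $L$ be a field extension of $K$ with a faithful $G$-action by automorphisms extending the action on $K$. Then any $K^G$-linear basis $v_1, \ldots, v_{\ell}$ of $K$ over $K^G$ (where $\ell = |G|$) is also an $L^G$-linear basis of $L$ over $L^G$; equivalently, $K$ is linearly disjoint from $L^G$ over $K^G$. -/
/-- If `G` acts faithfully (hence strictly) on fields `K ⊆ L` with the
inclusion `G`-equivariant, then any `K^G`-basis of `K` is also an `L^G`-basis of `L`;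
i.e. its image in `L` is `L^G`-linearly independent and spans `L` over `L^G`. -/
theorem basis_of_fixed_field_transfers
    (G K L : Type*) [Group G] [Fintype G] [Field K] [Field L] [CharZero K]
    [Algebra K L] [MulSemiringAction G K] [MulSemiringAction G L]
    [FaithfulSMul G K] [FaithfulSMul G L]
    (hequiv : ∀ (g : G) (a : K), algebraMap K L (g • a) = g • algebraMap K L a)
    {ℓ : ℕ} (hℓ : ℓ = Fintype.card G)
    (v : Module.Basis (Fin ℓ) (FixedPoints.subfield G K) K) :
    LinearIndependent (FixedPoints.subfield G L)
        (fun i : Fin ℓ => algebraMap K L (v i)) ∧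
      Submodule.span (FixedPoints.subfield G L)
        (Set.range fun i : Fin ℓ => algebraMap K L (v i)) = ⊤ := by
  classical
  have e : G ≃ Fin ℓ := Fintype.equivFinOfCardEq hℓ.symm
  set M : Matrix (Fin ℓ) (Fin ℓ) K := Matrix.of fun i j => e.symm j • v i with hMdef
  have hsmulK : ∀ (c : FixedPoints.subfield G K) (x : K), c • x = (c : K) * x :=
    fun _ _ => rfl
  have hsmulL : ∀ (c : FixedPoints.subfield G L) (x : L), c • x = (c : L) * x :=
    fun _ _ => rfl
  -- Dedekind: the characters g ↦ (g • ·) are K-linearly independent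
  have hφ : LinearIndependent K
      (fun g : G => ((MulSemiringAction.toRingHom G K g).toMonoidHom : K → K)) := by
    refine (linearIndependent_monoidHom K K).comp
      (fun g : G => (MulSemiringAction.toRingHom G K g).toMonoidHom) ?_
    intro g g' h
    refine eq_of_smul_eq_smul (α := K) fun x => ?_
    exact DFunLike.congr_fun h x
  have hdet : M.det ≠ 0 := by
    intro h
    obtain ⟨a, ha, hMa⟩ := Matrix.exists_mulVec_eq_zero_iff.mpr h
    apply ha
    have key : ∀ g : G, a (e g) = 0 := by
      refine Fintype.linearIndependent_iff.mp hφ (fun g => a (e g)) ?_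
      funext x
      have hx := v.sum_repr x
      calc (∑ g : G, a (e g) • ((MulSemiringAction.toRingHom G K g).toMonoidHom : K → K)) x
          = ∑ g : G, a (e g) * (g • x) := by
            simp [Finset.sum_apply, smul_eq_mul]
        _ = ∑ g : G, a (e g) * (g • (∑ i, v.repr x i • v i)) := by rw [hx]
        _ = ∑ g : G, ∑ i, (v.repr x i : K) * (a (e g) * (g • v i)) := by
            refine Finset.sum_congr rfl fun g _ => ?_
            rw [Finset.smul_sum, Finset.mul_sum]
            refine Finset.sum_congr rfl fun i _ => ?_
            rw [smul_comm g (v.repr x i) (v i)]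
            rw [hsmulK]; ring
        _ = ∑ i, (v.repr x i : K) * (∑ g : G, a (e g) * (g • v i)) := by
            rw [Finset.sum_comm]
            exact Finset.sum_congr rfl fun i _ => by rw [Finset.mul_sum]
        _ = 0 := by
            refine Finset.sum_eq_zero fun i _ => ?_
            have : ∑ g : G, a (e g) * (g • v i) = M.mulVec a i := by
              rw [Matrix.mulVec, dotProduct]
              rw [← Equiv.sum_comp e.symm (fun g => a (e g) * (g • v i))]
              simp [hMdef, mul_comm]
            rw [this, hMa, Pi.zero_apply, mul_zero]
    funext j
    simpa using key (e.symm j)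
  have hdetL : (M.map (algebraMap K L)).det ≠ 0 := by
    rw [← RingHom.mapMatrix_apply, ← RingHom.map_det]
    exact fun h => hdet ((map_eq_zero_iff _ (algebraMap K L).injective).mp h)
  have li : LinearIndependent (FixedPoints.subfield G L)
      (fun i : Fin ℓ => algebraMap K L (v i)) := by
    rw [Fintype.linearIndependent_iff]
    intro c hc
    have key : (M.map (algebraMap K L)).transpose.mulVec (fun i => (c i : L)) = 0 := by
      funext j
      have h0 : (e.symm j : G) • (∑ i, c i • algebraMap K L (v i)) = 0 := by
        rw [hc, smul_zero]
      rw [Finset.smul_sum] at h0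
      rw [Matrix.mulVec, dotProduct, Pi.zero_apply, ← h0]
      refine Finset.sum_congr rfl fun i _ => ?_
      rw [smul_comm, hsmulL, Matrix.transpose_apply, Matrix.map_apply, hMdef]
      simp [hequiv, mul_comm]
    have hz := Matrix.eq_zero_of_mulVec_eq_zero
      (by rwa [Matrix.det_transpose]) key
    intro i
    exact Subtype.ext (congrFun hz i)
  refine ⟨li, ?_⟩
  have hpos : 0 < ℓ := hℓ ▸ Fintype.card_pos
  have : Nonempty (Fin ℓ) := Fin.pos_iff_nonempty.mp hpos
  exact li.span_eq_top_of_card_eq_finrank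
    (by rw [Fintype.card_fin, hℓ, FixedPoints.finrank_eq_card])
end

section
/- Let $K \subseteq L$ be fields with $G$ a finite group acting on $L$ by automorphisms preserving $K$, and suppose the action on $K$ is faithful with $[K : K^G] = [L : L^G] = |G|$. Then $L^G \cap K = K^G$ and $L = K \cdot L^G$ (the compositum). -/
/-- If a finite group `G` acts faithfully (equivalently strictly) on fields
`K ⊆ L` with the inclusion `G`-equivariant, then `L^G ∩ K = K^G` and `L = K · L^G`. -/
theorem fixed_field_intersection_and_compositum
    (G K L : Type*) [Group G] [Fintype G] [Field K] [Field L] [CharZero K]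
    [Algebra K L] [MulSemiringAction G K] [MulSemiringAction G L]
    [FaithfulSMul G K] [FaithfulSMul G L]
    (hequiv : ∀ (g : G) (a : K), algebraMap K L (g • a) = g • algebraMap K L a) :
    (∀ a : K, algebraMap K L a ∈ FixedPoints.subfield G L ↔
        a ∈ FixedPoints.subfield G K) ∧
      (algebraMap K L).fieldRange ⊔ FixedPoints.subfield G L = ⊤ := by
  have hinj := (algebraMap K L).injective
  constructor
  · intro a
    constructor
    · intro h g
      apply hinj
      rw [hequiv, h g]
    · intro h g
      rw [← hequiv, h g]
  · set F := FixedPoints.subfield G L with hF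
    letI : IsGalois F L := IsGalois.of_fixed_field L G
    set M : IntermediateField F L :=
      IntermediateField.adjoin F (Set.range (algebraMap K L)) with hM
    have hMtop : M = ⊤ := by
      have hfix : M.fixingSubgroup = ⊥ := by
        rw [eq_bot_iff]
        intro σ hσ
        obtain ⟨g, hg⟩ := (FixedPoints.toAlgAut_bijective G L).surjective σ
        have hg1 : g = 1 := by
          apply FaithfulSMul.eq_of_smul_eq_smul (α := K)
          intro a
          have hmem : algebraMap K L a ∈ M :=
            IntermediateField.subset_adjoin _ _ ⟨a, rfl⟩
          have hfixed : σ (algebraMap K L a) = algebraMap K L a := hσ ⟨_, hmem⟩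
          rw [← hg] at hfixed
          have : g • algebraMap K L a = algebraMap K L a := hfixed
          rw [← hequiv] at this
          rw [one_smul]
          exact hinj this
        rw [Subgroup.mem_bot, ← hg, hg1]
        ext x
        simp
      have h1 := IsGalois.fixedField_fixingSubgroup M
      rw [hfix] at h1
      rw [← h1, eq_top_iff]
      intro x _
      intro g
      have : (g : L ≃ₐ[F] L) = 1 := Subgroup.mem_bot.mp g.2
      show (g : L ≃ₐ[F] L) • x = x
      rw [this]
      rfl
    rw [eq_top_iff]
    intro x _
    set S : Subfield L := (algebraMap K L).fieldRange ⊔ F with hS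
    have hFS : ∀ y : F, algebraMap F L y ∈ S := fun y => SetLike.le_def.mp le_sup_right y.2
    set S' : IntermediateField F L := S.toIntermediateField hFS with hS'
    have hMS : M ≤ S' := by
      rw [hM, IntermediateField.adjoin_le_iff]
      rintro _ ⟨a, rfl⟩
      have ha : algebraMap K L a ∈ (algebraMap K L).fieldRange := ⟨a, rfl⟩
      exact (le_sup_left : (algebraMap K L).fieldRange ≤ S) ha
    have : x ∈ M := hMtop ▸ IntermediateField.mem_top
    exact hMS this
end
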